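/- In an Eulerian digraph G with a distinguished root vertex r, given an Eulerian circuit starting and ending at r, the set consisting of, for each vertex v ≠ r, the last arc of the circuit with tail v, forms a spanning arborescence converging to r (i.e., from every vertex there is a directed path to r using only these arcs). -/

import Mathlib

/-- BEST-theorem direction: given an Eulerian circuit of a digraph starting and ending at `r`,
the collection consisting, for each vertex `v ≠ r`, of the last arc of the circuit with
tail `v` forms a spanning arborescence converging to `r`: from every vertex there is a
directed path to `r` using only these arcs. -/
theorem lastArcs_converge_to_root {V E : Type*} [Fintype V] [Fintype E]
    [DecidableEq V] [DecidableEq E]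
    (tl hd : E → V) (r : V) (es : List E)
    (hne : es ≠ [])
    (hstart : es.head?.map tl = some r)
    (hend : es.getLast?.map hd = some r)
    (hchain : List.Chain' (fun e f => hd e = tl f) es)
    (hnodup : es.Nodup)
    (hall : ∀ e : E, e ∈ es)
    (f : V → E)
    (hf : ∀ v : V, v ≠ r → tl (f v) = v ∧
      ∀ e ∈ es, tl e = v → es.idxOf e ≤ es.idxOf (f v)) :
    ∀ v : V, Relation.ReflTransGen (fun x y => x ≠ r ∧ hd (f x) = y) v r := by
  have hlast : hd (es.getLast hne) = r := by
    rw [List.getLast?_eq_getLast hne] at hend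
    simpa using hend
  have key : ∀ n : ℕ, ∀ v : V, es.length - es.idxOf (f v) ≤ n →
      Relation.ReflTransGen (fun x y => x ≠ r ∧ hd (f x) = y) v r := by
    intro n
    induction n with
    | zero =>
      intro v hle
      have hmem : f v ∈ es := hall (f v)
      have : es.idxOf (f v) < es.length := List.idxOf_lt_length_iff.2 hmem
      omega
    | succ n ih =>
      intro v hle
      by_cases hv : v = r
      · exact hv ▸ Relation.ReflTransGen.refl
      set i := es.idxOf (f v) with hi
      have hmem : f v ∈ es := hall (f v)
      have hilt : i < es.length := List.idxOf_lt_length_iff.2 hmem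
      have hget : es.get ⟨i, hilt⟩ = f v := List.idxOf_get hilt
      by_cases hw : hd (f v) = r
      · exact Relation.ReflTransGen.single ⟨hv, hw⟩
      · -- i + 1 < es.length, else f v is the last arc whose head is r
        have hi1 : i + 1 < es.length := by
          rcases lt_or_eq_of_le (Nat.succ_le_of_lt hilt) with h | h
          · exact h
          · exfalso
            apply hw
            have : es.getLast hne = f v := by
              rw [List.getLast_eq_getElem]
              have h' : es.length - 1 = i := by omega
              simp only [h']
              rw [← hget]; rfl
            rw [← this, hlast]
        have hchain' := List.isChain_iff_getElem.1 hchain i (by omega)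
        rw [show es[i] = f v from hget] at hchain'
        -- tl (es.get ⟨i+1⟩) = hd (f v)
        set w := hd (f v) with hwdef
        obtain ⟨_, hmax⟩ := hf w hw
        have hidx : es.idxOf (es.get ⟨i + 1, hi1⟩) = i + 1 :=
          List.get_idxOf hnodup _
        have hle2 : i + 1 ≤ es.idxOf (f w) := by
          have := hmax (es.get ⟨i + 1, hi1⟩) (List.get_mem _ _) hchain'.symm
          rwa [hidx] at this
        have : es.length - es.idxOf (f w) ≤ n := by omega
        exact Relation.ReflTransGen.head ⟨hv, rfl⟩ (ih w this)
  intro v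
  exact key (es.length - es.idxOf (f v)) v le_rfl
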